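/- Let r be a solution of the log-variable integral equation on an interval 𝓘 containing t_0, with initial datum (t_0, ν_0) where ν_0 has finite first moment in the r-variable. Then there exists a constant R̄ > 0, independent of t and r_0, such that for all t ∈ 𝓘 with t ≥ t_0, ∫ |r(t, r_0, θ)| dν_0(r_0, θ) ≤ ( ∫ |r_0| dν_0^r(r_0) + R̄ )·e^{2γ_M (t − t_0)} − R̄. -/

import Mathlib

open MeasureTheory Set
open scoped ENNReal

/-- The individual-parameter space `ℝ² × ℝ × ℝ`, with elements `θ = (x, S, γ)`. -/
abbrev Param : Type := EuclideanSpace ℝ (Fin 2) × ℝ × ℝ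

/-- The admissible parameter set `Θ = ℝ² × [s_m, s_m e^{R_M}] × [0, γ_M]`. -/
def ΘSet (sm RM γM : ℝ) : Set Param :=
  {p : Param | sm ≤ p.2.1 ∧ p.2.1 ≤ sm * Real.exp RM ∧ 0 ≤ p.2.2 ∧ p.2.2 ≤ γM}

/-- The log-variable competition kernel
`C_r(r, r', d) = r' / (2 R_M (1 + d²/σ_x²)) · (1 + tanh((r' − r)/σ_r))`. -/
noncomputable def potR (RM σx σr r r' d : ℝ) : ℝ :=
  r' / (2 * RM * (1 + d ^ 2 / σx ^ 2)) * (1 + Real.tanh ((r' - r) / σr))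

/-- The nonlocal competition term
`𝒞_r(ρ, t, r_0, θ) = ∫ C_r(ρ(t,r_0,θ), ρ(t,r_0',θ'), |x−x'|) dν_0(r_0',θ')`. -/
noncomputable def compR (RM σx σr : ℝ) (ν0 : Measure (ℝ × Param))
    (ρ : ℝ → ℝ → Param → ℝ) (t r0 : ℝ) (θ : Param) : ℝ :=
  ∫ z, potR RM σx σr (ρ t r0 θ) (ρ t z.1 z.2) (dist θ.1 z.2.1) ∂ν0

/-- `r` is a solution of the log-variable integral equation on the interval `I ∋ t0` with
initial datum `(t0, ν0)`: it is continuous in time and satisfies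
`r(t,r_0,θ) = r_0 + γ ∫_{t_0}^t ( log(S/s_m)(1 − 𝒞_r(r,τ,r_0,θ)) − r(τ,r_0,θ) ) dτ`. -/
def IsLogSolOn (sm RM σx σr γM : ℝ) (ν0 : Measure (ℝ × Param)) (t0 : ℝ)
    (I : Set ℝ) (r : ℝ → ℝ → Param → ℝ) : Prop :=
  t0 ∈ I ∧ I.OrdConnected ∧
  (∀ (r0 : ℝ) (θ : Param), ContinuousOn (fun t => r t r0 θ) I) ∧
  ∀ t ∈ I, ∀ r0 : ℝ, ∀ θ ∈ ΘSet sm RM γM,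
    r t r0 θ = r0 + θ.2.2 * ∫ τ in t0..t,
      (Real.log (θ.2.1 / sm) * (1 - compR RM σx σr ν0 r τ r0 θ) - r τ r0 θ)

/-! ### Auxiliary lemmas -/

lemma one_add_tanh_eq (x : ℝ) : 1 + Real.tanh x = Real.exp x / Real.cosh x := by
  rw [Real.tanh_eq_sinh_div_cosh, ← Real.cosh_add_sinh]
  field_simp [(Real.cosh_pos x).ne']

lemma one_add_tanh_nonneg (x : ℝ) : 0 ≤ 1 + Real.tanh x := by
  rw [one_add_tanh_eq]; positivity

lemma one_add_tanh_le_two (x : ℝ) : 1 + Real.tanh x ≤ 2 := by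
  rw [one_add_tanh_eq, div_le_iff₀ (Real.cosh_pos x)]
  nlinarith [Real.exp_pos (-x), Real.cosh_sub_sinh x, Real.cosh_add_sinh x]

lemma one_add_tanh_le_exp (x : ℝ) : 1 + Real.tanh x ≤ 2 * Real.exp (2 * x) := by
  rw [one_add_tanh_eq, div_le_iff₀ (Real.cosh_pos x)]
  have h1 : Real.exp x * Real.exp (-x) = 1 := by rw [← Real.exp_add]; simp
  have h2 : Real.exp (2 * x) = Real.exp x * Real.exp x := by rw [← Real.exp_add]; ring_nf
  have h3 : Real.exp (-x) / 2 ≤ Real.cosh x := by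
    rw [Real.cosh_eq]; nlinarith [Real.exp_pos x]
  nlinarith [mul_le_mul_of_nonneg_left h3 (by positivity : (0:ℝ) ≤ 2 * (Real.exp x * Real.exp x)),
    Real.exp_pos x, Real.exp_pos (-x)]

lemma key_neg' {σr b : ℝ} (hσr : 0 < σr) (hb : b < 0) :
    -σr ≤ 2 * Real.exp 1 * (b * Real.exp (2 * b / σr)) := by
  set y := -(2 * b) / σr with hy
  have hy0 : 0 < y := div_pos (by linarith) hσr
  have hby : b = -(σr * y) / 2 := by rw [hy]; field_simp
  have harg : 2 * b / σr = -y := by rw [hy]; field_simp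
  have h1 : y * Real.exp 1 ≤ Real.exp y := by
    have h := Real.add_one_le_exp (y - 1)
    have h2 : Real.exp (y - 1) * Real.exp 1 = Real.exp y := by
      rw [← Real.exp_add]; ring_nf
    have h3 := mul_le_mul_of_nonneg_right h (Real.exp_pos 1).le
    rw [h2] at h3; linarith
  have hinv : Real.exp y * Real.exp (-y) = 1 := by rw [← Real.exp_add]; simp
  have h3 : y * Real.exp 1 * Real.exp (-y) ≤ 1 := by
    have := mul_le_mul_of_nonneg_right h1 (Real.exp_pos (-y)).le
    nlinarith [Real.exp_pos (-y)]
  rw [harg, hby]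
  have h4 : σr * (y * Real.exp 1 * Real.exp (-y)) ≤ σr * 1 :=
    mul_le_mul_of_nonneg_left h3 hσr.le
  nlinarith [h4]

section potRbounds
variable {RM σx σr a b d : ℝ}

lemma D_pos (hRM : 0 < RM) (hσx : 0 < σx) : 0 < 2 * RM * (1 + d ^ 2 / σx ^ 2) := by positivity

lemma D_ge (hRM : 0 < RM) (hσx : 0 < σx) : 2 * RM ≤ 2 * RM * (1 + d ^ 2 / σx ^ 2) := by
  have hq : 0 ≤ d ^ 2 / σx ^ 2 := by positivity
  nlinarith

lemma potR_abs_le (hRM : 0 < RM) (hσx : 0 < σx) :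
    |potR RM σx σr a b d| ≤ |b| / RM := by
  have hD := D_pos (d := d) hRM hσx
  have hD2 := D_ge (d := d) hRM hσx
  have hT0 := one_add_tanh_nonneg ((b - a) / σr)
  have hT2 := one_add_tanh_le_two ((b - a) / σr)
  rw [potR, abs_mul, abs_div, abs_of_pos hD, abs_of_nonneg hT0]
  rw [div_mul_eq_mul_div, div_le_div_iff₀ hD hRM]
  nlinarith [abs_nonneg b, mul_nonneg (mul_nonneg (abs_nonneg b) (sub_nonneg.2 hT2)) hRM.le,
    mul_nonneg (abs_nonneg b) (sub_nonneg.2 hD2)]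

lemma potR_le_max (hRM : 0 < RM) (hσx : 0 < σx) :
    potR RM σx σr a b d ≤ max b 0 / RM := by
  have hD := D_pos (d := d) hRM hσx
  have hD2 := D_ge (d := d) hRM hσx
  have hT0 := one_add_tanh_nonneg ((b - a) / σr)
  have hT2 := one_add_tanh_le_two ((b - a) / σr)
  rw [potR, div_mul_eq_mul_div, div_le_div_iff₀ hD hRM]
  rcases le_or_gt b 0 with hb | hb
  · rw [max_eq_right hb]
    have h : b * (1 + Real.tanh ((b - a) / σr)) * RM ≤ 0 := by
      apply mul_nonpos_of_nonpos_of_nonneg _ hRM.le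
      exact mul_nonpos_of_nonpos_of_nonneg hb hT0
    nlinarith
  · rw [max_eq_left hb.le]
    nlinarith [mul_nonneg (mul_nonneg hb.le (sub_nonneg.2 hT2)) hRM.le,
      mul_nonneg hb.le (sub_nonneg.2 hD2)]

lemma potR_ge (hRM : 0 < RM) (hσx : 0 < σx) (hσr : 0 < σr) :
    -(σr / (2 * Real.exp 1 * RM)) * Real.exp (-(2 * a) / σr) ≤ potR RM σx σr a b d := by
  have hD := D_pos (d := d) hRM hσx
  have hD2 := D_ge (d := d) hRM hσx
  have hT0 := one_add_tanh_nonneg ((b - a) / σr)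
  have hA : (0:ℝ) < Real.exp (-(2 * a) / σr) := Real.exp_pos _
  have e1pos := Real.exp_pos 1
  have hc : σr / (2 * Real.exp 1 * RM) * (2 * Real.exp 1 * RM) = σr := by field_simp
  have hc0 : (0:ℝ) ≤ σr / (2 * Real.exp 1 * RM) := by positivity
  rcases le_or_gt 0 b with hb | hb
  · have hpos : 0 ≤ potR RM σx σr a b d := by
      rw [potR]; exact mul_nonneg (div_nonneg hb hD.le) hT0
    nlinarith [mul_nonneg hc0 hA.le]
  · have hTe := one_add_tanh_le_exp ((b - a) / σr)
    have c2 : Real.exp (2 * ((b - a) / σr))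
        = Real.exp (2 * b / σr) * Real.exp (-(2 * a) / σr) := by
      rw [← Real.exp_add]; congr 1; field_simp; ring
    have h5 : b * (2 * (Real.exp (2 * b / σr) * Real.exp (-(2 * a) / σr)))
        ≤ b * (1 + Real.tanh ((b - a) / σr)) := by
      have := mul_le_mul_of_nonpos_left hTe hb.le
      rw [c2] at this; exact this
    have key := key_neg' hσr hb
    have step1' : -(σr * Real.exp (-(2 * a) / σr))
        ≤ Real.exp 1 * (b * (1 + Real.tanh ((b - a) / σr))) := by
      have H1 := mul_le_mul_of_nonneg_right key hA.le
      have H2 := mul_le_mul_of_nonneg_left h5 e1pos.le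
      have H3 : 2 * Real.exp 1 * (b * Real.exp (2 * b / σr)) * Real.exp (-(2 * a) / σr)
          = Real.exp 1 * (b * (2 * (Real.exp (2 * b / σr) * Real.exp (-(2 * a) / σr)))) := by
        ring
      linarith [H1, H2, H3]
    have hbT : b * (1 + Real.tanh ((b - a) / σr)) ≤ 0 :=
      mul_nonpos_of_nonpos_of_nonneg hb.le hT0
    have k1 : -(σr / (2 * Real.exp 1 * RM) * Real.exp (-(2 * a) / σr)) * (2 * RM)
        ≤ b * (1 + Real.tanh ((b - a) / σr)) := by
      apply le_of_mul_le_mul_left _ e1pos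
      have E : Real.exp 1 * (-(σr / (2 * Real.exp 1 * RM) * Real.exp (-(2 * a) / σr)) * (2 * RM))
          = -(σr * Real.exp (-(2 * a) / σr)) := by
        linear_combination (-(Real.exp (-(2 * a) / σr))) * hc
      rw [E]; exact step1'
    have k2 : -(σr / (2 * Real.exp 1 * RM) * Real.exp (-(2 * a) / σr))
          * (2 * RM * (1 + d ^ 2 / σx ^ 2))
        ≤ -(σr / (2 * Real.exp 1 * RM) * Real.exp (-(2 * a) / σr)) * (2 * RM) :=
      mul_le_mul_of_nonpos_left hD2 (neg_nonpos.mpr (mul_nonneg hc0 hA.le))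
    rw [potR, div_mul_eq_mul_div, le_div_iff₀ hD]
    calc -(σr / (2 * Real.exp 1 * RM)) * Real.exp (-(2 * a) / σr)
          * (2 * RM * (1 + d ^ 2 / σx ^ 2))
        = -(σr / (2 * Real.exp 1 * RM) * Real.exp (-(2 * a) / σr))
          * (2 * RM * (1 + d ^ 2 / σx ^ 2)) := by ring
      _ ≤ -(σr / (2 * Real.exp 1 * RM) * Real.exp (-(2 * a) / σr)) * (2 * RM) := k2
      _ ≤ b * (1 + Real.tanh ((b - a) / σr)) := k1

end potRbounds

lemma max_principle (u g : ℝ → ℝ) (t0 t c V γ : ℝ) (htt : t0 ≤ t) (hγ : 0 ≤ γ)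
    (hu : ContinuousOn u (Icc t0 t))
    (heq : ∀ t' ∈ Icc t0 t, u t' = c + γ * ∫ σ in t0..t', g σ)
    (hg : ∀ σ ∈ Icc t0 t, V ≤ u σ → g σ ≤ 0) :
    u t ≤ max c V := by
  by_cases hII : IntervalIntegrable g MeasureTheory.volume t0 t
  · by_contra hlt
    push_neg at hlt
    set C := Icc t0 t ∩ u ⁻¹' (Iic (max c V)) with hCdef
    have ht0C : t0 ∈ C := by
      refine ⟨⟨le_refl _, htt⟩, ?_⟩
      have h0 := heq t0 ⟨le_refl _, htt⟩
      simp only [intervalIntegral.integral_same, mul_zero, add_zero] at h0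
      simp only [Set.mem_preimage, Set.mem_Iic, h0]
      exact le_max_left _ _
    have hCcl : IsClosed C := hu.preimage_isClosed_of_isClosed isClosed_Icc isClosed_Iic
    have hCcpt : IsCompact C := IsCompact.of_isClosed_subset isCompact_Icc hCcl inter_subset_left
    have hCne : C.Nonempty := ⟨t0, ht0C⟩
    have hsC : sSup C ∈ C := hCcpt.sSup_mem hCne
    have hsIcc : sSup C ∈ Icc t0 t := hsC.1
    have hus : u (sSup C) ≤ max c V := hsC.2
    have hst : sSup C < t :=
      lt_of_le_of_ne hsIcc.2 (fun h => absurd (h ▸ hus) (not_le.mpr hlt))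
    have hbdd : BddAbove C := hCcpt.bddAbove
    have hgneg : ∀ σ ∈ Ioc (sSup C) t, g σ ≤ 0 := by
      intro σ hσ
      have hσI : σ ∈ Icc t0 t := ⟨hsIcc.1.trans hσ.1.le, hσ.2⟩
      apply hg σ hσI
      by_contra hcon
      push_neg at hcon
      have : σ ∈ C := ⟨hσI, le_trans hcon.le (le_max_right c V)⟩
      exact absurd (le_csSup hbdd this) (not_le.mpr hσ.1)
    have hII1 : IntervalIntegrable g MeasureTheory.volume t0 (sSup C) :=
      hII.mono_set (by
        rw [uIcc_of_le hsIcc.1, uIcc_of_le htt]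
        exact Icc_subset_Icc le_rfl hsIcc.2)
    have hII2 : IntervalIntegrable g MeasureTheory.volume (sSup C) t :=
      hII.mono_set (by
        rw [uIcc_of_le hst.le, uIcc_of_le htt]
        exact Icc_subset_Icc hsIcc.1 le_rfl)
    have hsplit := intervalIntegral.integral_add_adjacent_intervals hII1 hII2
    have hneg : (∫ σ in (sSup C)..t, g σ) ≤ 0 := by
      rw [intervalIntegral.integral_of_le hst.le]
      have h1 : 0 ≤ ∫ σ in Ioc (sSup C) t, (-g σ) ∂MeasureTheory.volume :=
        setIntegral_nonneg measurableSet_Ioc (fun σ hσ => neg_nonneg.mpr (hgneg σ hσ))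
      rw [integral_neg] at h1
      linarith
    have hut := heq t ⟨htt, le_refl _⟩
    have hus' := heq (sSup C) hsIcc
    have hkey : u t = u (sSup C) + γ * ∫ σ in (sSup C)..t, g σ := by
      rw [hut, hus', ← hsplit]; ring
    nlinarith [mul_nonpos_of_nonneg_of_nonpos hγ hneg]
  · have h0 := heq t ⟨htt, le_refl _⟩
    rw [intervalIntegral.integral_undef hII] at h0
    simp only [mul_zero, add_zero] at h0
    rw [h0]; exact le_max_left _ _

set_option maxHeartbeats 1000000 in
/-- propagation of the first moment of the initial distribution along a solution of
the log-variable integral equation. -/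
theorem stmt_10 (sm RM σx σr γM : ℝ)
    (hsm : 0 < sm) (hRM : 0 < RM) (hσx : 0 < σx) (hσr : 0 < σr) (hγM : 0 < γM)
    (t0 : ℝ) (ν0 : Measure (ℝ × Param)) [IsProbabilityMeasure ν0]
    (hsupp : ∀ᵐ z ∂ν0, z.2 ∈ ΘSet sm RM γM)
    (hmom : Integrable (fun z : ℝ × Param => |z.1|) ν0)
    (I : Set ℝ) (r : ℝ → ℝ → Param → ℝ)
    (hr : IsLogSolOn sm RM σx σr γM ν0 t0 I r) :
    ∃ Rbar : ℝ, 0 < Rbar ∧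
      ∀ t ∈ I, t0 ≤ t →
        (∫ z, |r t z.1 z.2| ∂ν0)
          ≤ ((∫ z : ℝ × Param, |z.1| ∂ν0) + Rbar) * Real.exp (2 * γM * (t - t0)) - Rbar := by
  obtain ⟨ht0I, hOrd, hcont, hsol⟩ := hr
  obtain ⟨M0, hM0def⟩ : ∃ x, (∫ z : ℝ × Param, |z.1| ∂ν0) = x := ⟨_, rfl⟩
  have hM0 : 0 ≤ M0 := hM0def ▸ integral_nonneg (fun z => abs_nonneg _)
  obtain ⟨V, hVdef⟩ : ∃ x, RM + σr / (2 * Real.exp 1) = x := ⟨_, rfl⟩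
  have hV0 : 0 < V := by rw [← hVdef]; positivity
  obtain ⟨K1, hK1def⟩ : ∃ x, M0 + V = x := ⟨_, rfl⟩
  have hK10 : 0 < K1 := by rw [← hK1def]; linarith
  obtain ⟨P, hPdef⟩ : ∃ x, (M0 + K1) / RM = x := ⟨_, rfl⟩
  have hP0 : 0 ≤ P := by rw [← hPdef]; positivity
  obtain ⟨Rb, hRbdef⟩ : ∃ x, RM * (1 + P) + K1 = x := ⟨_, rfl⟩
  have hRb0 : 0 < Rb := by rw [← hRbdef]; nlinarith
  -- basic facts about θ ∈ Θ
  have hLfacts : ∀ θ : Param, θ ∈ ΘSet sm RM γM →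
      0 ≤ Real.log (θ.2.1 / sm) ∧ Real.log (θ.2.1 / sm) ≤ RM := by
    intro θ hθ
    obtain ⟨h1, h2, _, _⟩ := hθ
    have hS : 0 < θ.2.1 := lt_of_lt_of_le hsm h1
    constructor
    · exact Real.log_nonneg ((one_le_div hsm).mpr h1)
    · rw [Real.log_le_iff_le_exp (by positivity)]
      rw [div_le_iff₀ hsm]
      linarith [h2, mul_comm sm (Real.exp RM)]
  -- Step B': unconditional lower bound on compR
  have h_comp_lb : ∀ (τ r0 : ℝ) (θ : Param),
      -(σr / (2 * Real.exp 1 * RM)) * Real.exp (-(2 * (r τ r0 θ)) / σr)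
        ≤ compR RM σx σr ν0 r τ r0 θ := by
    intro τ r0 θ
    rw [compR]
    by_cases hInt : Integrable
        (fun z : ℝ × Param => potR RM σx σr (r τ r0 θ) (r τ z.1 z.2) (dist θ.1 z.2.1)) ν0
    · have hmono := integral_mono_ae
        (integrable_const (-(σr / (2 * Real.exp 1 * RM))
          * Real.exp (-(2 * (r τ r0 θ)) / σr))) hInt
        (Filter.Eventually.of_forall (fun z => potR_ge hRM hσx hσr))
      rwa [integral_const, probReal_univ, one_smul] at hmono
    · rw [integral_undef hInt]
      have h := mul_nonneg (show (0:ℝ) ≤ σr / (2 * Real.exp 1 * RM) by positivity)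
        (Real.exp_pos (-(2 * (r τ r0 θ)) / σr)).le
      linarith
  -- Step (i): upper maximum principle
  have h_upper : ∀ (r0 : ℝ) (θ : Param), θ ∈ ΘSet sm RM γM → ∀ t ∈ I, t0 ≤ t →
      r t r0 θ ≤ max r0 V := by
    intro r0 θ hθ t htI htt
    have hsub : Icc t0 t ⊆ I := hOrd.out ht0I htI
    obtain ⟨hL0, hL1⟩ := hLfacts θ hθ
    refine max_principle (fun τ => r τ r0 θ)
      (fun τ => Real.log (θ.2.1 / sm) * (1 - compR RM σx σr ν0 r τ r0 θ) - r τ r0 θ)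
      t0 t r0 V θ.2.2 htt hθ.2.2.1
      ((hcont r0 θ).mono hsub)
      (fun t' ht' => hsol t' (hsub ht') r0 θ hθ) ?_
    intro σ hσ hVu
    have hcb := h_comp_lb σ r0 θ
    have hu0 : 0 ≤ r σ r0 θ := le_trans hV0.le hVu
    have hA1 : Real.exp (-(2 * (r σ r0 θ)) / σr) ≤ 1 := by
      rw [Real.exp_le_one_iff]
      rw [div_nonpos_iff]
      right; constructor <;> [linarith; exact hσr.le]
    have hA0 : (0:ℝ) < Real.exp (-(2 * (r σ r0 θ)) / σr) := Real.exp_pos _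
    have h1 : 1 - compR RM σx σr ν0 r σ r0 θ
        ≤ 1 + σr / (2 * Real.exp 1 * RM) * Real.exp (-(2 * (r σ r0 θ)) / σr) := by
      nlinarith [hcb]
    have h2 : (0:ℝ) ≤ 1 + σr / (2 * Real.exp 1 * RM) * Real.exp (-(2 * (r σ r0 θ)) / σr) := by
      positivity
    have h3 : Real.log (θ.2.1 / sm) * (1 - compR RM σx σr ν0 r σ r0 θ)
        ≤ RM * (1 + σr / (2 * Real.exp 1 * RM) * Real.exp (-(2 * (r σ r0 θ)) / σr)) := by
      calc Real.log (θ.2.1 / sm) * (1 - compR RM σx σr ν0 r σ r0 θ)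
          ≤ Real.log (θ.2.1 / sm)
            * (1 + σr / (2 * Real.exp 1 * RM) * Real.exp (-(2 * (r σ r0 θ)) / σr)) :=
            mul_le_mul_of_nonneg_left h1 hL0
        _ ≤ RM * (1 + σr / (2 * Real.exp 1 * RM) * Real.exp (-(2 * (r σ r0 θ)) / σr)) :=
            mul_le_mul_of_nonneg_right hL1 h2
    have h4 : RM * (σr / (2 * Real.exp 1 * RM)) = σr / (2 * Real.exp 1) := by
      field_simp
    have h7 : RM * (σr / (2 * Real.exp 1 * RM)) * Real.exp (-(2 * (r σ r0 θ)) / σr)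
        = σr / (2 * Real.exp 1) * Real.exp (-(2 * (r σ r0 θ)) / σr) := by rw [h4]
    have h8 : (0:ℝ) ≤ σr / (2 * Real.exp 1) := by positivity
    have h5 : RM * (1 + σr / (2 * Real.exp 1 * RM) * Real.exp (-(2 * (r σ r0 θ)) / σr))
        ≤ RM + σr / (2 * Real.exp 1) := by
      nlinarith [mul_nonneg h8 (sub_nonneg.2 hA1)]
    have hVu' : RM + σr / (2 * Real.exp 1) ≤ r σ r0 θ := by rw [hVdef]; exact hVu
    linarith
  -- Step (ii): upper bound on compR
  have h_comp_ub : ∀ τ ∈ I, t0 ≤ τ → ∀ (r0 : ℝ) (θ : Param),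
      compR RM σx σr ν0 r τ r0 θ ≤ K1 / RM := by
    intro τ hτI hττ r0 θ
    rw [compR]
    have hφint : Integrable (fun z : ℝ × Param => (|z.1| + V) / RM) ν0 :=
      (hmom.add (integrable_const V)).div_const RM
    have hφval : ∫ z : ℝ × Param, (|z.1| + V) / RM ∂ν0 = K1 / RM := by
      rw [integral_div, integral_add hmom (integrable_const V), integral_const,
        probReal_univ, one_smul, hM0def, hK1def]
    have hFle : ∀ᵐ z ∂ν0, potR RM σx σr (r τ r0 θ) (r τ z.1 z.2) (dist θ.1 z.2.1)
        ≤ (|z.1| + V) / RM := by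
      refine hsupp.mono (fun z hz => ?_)
      have h1 := potR_le_max (σr := σr) (a := r τ r0 θ) (b := r τ z.1 z.2)
        (d := dist θ.1 z.2.1) hRM hσx
      have h2 := h_upper z.1 z.2 hz τ hτI hττ
      have h3 : max (r τ z.1 z.2) 0 ≤ |z.1| + V := by
        have hz1 := abs_nonneg z.1
        apply max_le _ (by linarith)
        refine h2.trans (max_le (by linarith [le_abs_self z.1]) (by linarith))
      exact h1.trans ((div_le_div_iff_of_pos_right hRM).mpr h3)
    by_cases hInt : Integrable
        (fun z : ℝ × Param => potR RM σx σr (r τ r0 θ) (r τ z.1 z.2) (dist θ.1 z.2.1)) ν0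
    · exact (integral_mono_ae hInt hφint hFle).trans_eq hφval
    · rw [integral_undef hInt, ← hφval]
      exact integral_nonneg (fun z => div_nonneg (by linarith [abs_nonneg z.1]) hRM.le)
  -- Step (iii): lower maximum principle
  have h_lower : ∀ (r0 : ℝ) (θ : Param), θ ∈ ΘSet sm RM γM → ∀ t ∈ I, t0 ≤ t →
      -(r t r0 θ) ≤ max (-r0) K1 := by
    intro r0 θ hθ t htI htt
    have hsub : Icc t0 t ⊆ I := hOrd.out ht0I htI
    obtain ⟨hL0, hL1⟩ := hLfacts θ hθ
    refine max_principle (fun τ => -(r τ r0 θ))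
      (fun τ => -(Real.log (θ.2.1 / sm) * (1 - compR RM σx σr ν0 r τ r0 θ) - r τ r0 θ))
      t0 t (-r0) K1 θ.2.2 htt hθ.2.2.1
      (((hcont r0 θ).mono hsub).neg)
      (fun t' ht' => by
        have h := hsol t' (hsub ht') r0 θ hθ
        rw [intervalIntegral.integral_neg]
        rw [h]; ring) ?_
    intro σ hσ hVu
    simp only [neg_sub] at hVu ⊢
    -- hVu : K1 ≤ -(r σ r0 θ); goal : -(L * (1 - comp) - u) ≤ 0, i.e. 0 ≤ g
    have hcu := h_comp_ub σ (hsub hσ) hσ.1 r0 θ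
    have hLc : -K1 ≤ Real.log (θ.2.1 / sm) * (1 - compR RM σx σr ν0 r σ r0 θ) := by
      rcases le_or_gt 0 (1 - compR RM σx σr ν0 r σ r0 θ) with hpos | hneg
      · have := mul_nonneg hL0 hpos; linarith
      · have hs1 : RM * (1 - compR RM σx σr ν0 r σ r0 θ)
            ≤ Real.log (θ.2.1 / sm) * (1 - compR RM σx σr ν0 r σ r0 θ) :=
          mul_le_mul_of_nonpos_right hL1 hneg.le
        have hs2 : RM * (1 - K1 / RM) ≤ RM * (1 - compR RM σx σr ν0 r σ r0 θ) :=
          mul_le_mul_of_nonneg_left (by linarith) hRM.le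
        have hs3 : RM * (1 - K1 / RM) = RM - K1 := by field_simp
        linarith
    linarith
  -- pointwise two-sided bound
  have h_absbound : ∀ (r0 : ℝ) (θ : Param), θ ∈ ΘSet sm RM γM → ∀ t ∈ I, t0 ≤ t →
      |r t r0 θ| ≤ |r0| + K1 := by
    intro r0 θ hθ t htI htt
    have h1 := h_upper r0 θ hθ t htI htt
    have h2 := h_lower r0 θ hθ t htI htt
    have hVK : V ≤ K1 := by rw [← hK1def]; linarith
    rw [abs_le]
    constructor
    · have : max (-r0) K1 ≤ |r0| + K1 :=
        max_le (le_trans (neg_le_abs r0) (by linarith [abs_nonneg r0])) (by linarith [abs_nonneg r0])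
      linarith
    · have : max r0 V ≤ |r0| + K1 :=
        max_le (le_trans (le_abs_self r0) (by linarith)) (by linarith [abs_nonneg r0])
      linarith
  -- Step (iv): two-sided bound on compR
  have h_comp_abs : ∀ τ ∈ I, t0 ≤ τ → ∀ (r0 : ℝ) (θ : Param),
      |compR RM σx σr ν0 r τ r0 θ| ≤ P := by
    intro τ hτI hττ r0 θ
    rw [compR]
    have hφint : Integrable (fun z : ℝ × Param => (|z.1| + K1) / RM) ν0 :=
      (hmom.add (integrable_const K1)).div_const RM
    have hφval : ∫ z : ℝ × Param, (|z.1| + K1) / RM ∂ν0 = P := by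
      rw [integral_div, integral_add hmom (integrable_const K1), integral_const,
        probReal_univ, one_smul, hM0def, hPdef]
    have habs : |∫ z, potR RM σx σr (r τ r0 θ) (r τ z.1 z.2) (dist θ.1 z.2.1) ∂ν0|
        ≤ ∫ z, |potR RM σx σr (r τ r0 θ) (r τ z.1 z.2) (dist θ.1 z.2.1)| ∂ν0 := by
      have := norm_integral_le_integral_norm
        (f := fun z : ℝ × Param => potR RM σx σr (r τ r0 θ) (r τ z.1 z.2) (dist θ.1 z.2.1))
        (μ := ν0)
      simpa [Real.norm_eq_abs] using this
    refine habs.trans ?_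
    refine le_trans (integral_mono_of_nonneg
      (Filter.Eventually.of_forall (fun z => abs_nonneg _)) hφint ?_) hφval.le
    refine hsupp.mono (fun z hz => ?_)
    have h1 := potR_abs_le (σr := σr) (a := r τ r0 θ) (b := r τ z.1 z.2)
      (d := dist θ.1 z.2.1) hRM hσx
    have h2 := h_absbound z.1 z.2 hz τ hτI hττ
    exact h1.trans ((div_le_div_iff_of_pos_right hRM).mpr h2)
  -- Step (v): pointwise exponential bound
  have h_point : ∀ t ∈ I, t0 ≤ t → ∀ (r0 : ℝ) (θ : Param), θ ∈ ΘSet sm RM γM →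
      |r t r0 θ| ≤ (|r0| + Rb) * Real.exp (2 * γM * (t - t0)) - Rb := by
    intro t htI htt r0 θ hθ
    have hsub : Icc t0 t ⊆ I := hOrd.out ht0I htI
    obtain ⟨hL0, hL1⟩ := hLfacts θ hθ
    have hX0 : 0 ≤ 2 * γM * (t - t0) := by nlinarith
    have hE1 : 1 + 2 * γM * (t - t0) ≤ Real.exp (2 * γM * (t - t0)) := by
      have := Real.add_one_le_exp (2 * γM * (t - t0)); linarith
    have hEpos : (0:ℝ) < Real.exp (2 * γM * (t - t0)) := Real.exp_pos _
    have heqn := hsol t htI r0 θ hθ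
    by_cases hII : IntervalIntegrable
        (fun τ => Real.log (θ.2.1 / sm) * (1 - compR RM σx σr ν0 r τ r0 θ) - r τ r0 θ)
        MeasureTheory.volume t0 t
    · -- |g σ| ≤ Rb + |r0| on Icc
      have hgb : ∀ σ ∈ Icc t0 t,
          |Real.log (θ.2.1 / sm) * (1 - compR RM σx σr ν0 r σ r0 θ) - r σ r0 θ|
            ≤ Rb + |r0| := by
        intro σ hσ
        have hca := h_comp_abs σ (hsub hσ) hσ.1 r0 θ
        have hab := h_absbound r0 θ hθ σ (hsub hσ) hσ.1
        have t1 : |Real.log (θ.2.1 / sm) * (1 - compR RM σx σr ν0 r σ r0 θ) - r σ r0 θ|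
            ≤ |Real.log (θ.2.1 / sm) * (1 - compR RM σx σr ν0 r σ r0 θ)| + |r σ r0 θ| :=
          abs_sub _ _
        have t2 : |Real.log (θ.2.1 / sm) * (1 - compR RM σx σr ν0 r σ r0 θ)|
            = Real.log (θ.2.1 / sm) * |1 - compR RM σx σr ν0 r σ r0 θ| := by
          rw [abs_mul, abs_of_nonneg hL0]
        have t3 : |1 - compR RM σx σr ν0 r σ r0 θ| ≤ 1 + P := by
          have := abs_sub (1:ℝ) (compR RM σx σr ν0 r σ r0 θ)
          simp only [abs_one] at this
          linarith
        have t4 : Real.log (θ.2.1 / sm) * |1 - compR RM σx σr ν0 r σ r0 θ| ≤ RM * (1 + P) :=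
          mul_le_mul hL1 t3 (abs_nonneg _) hRM.le
        have hRbeq : RM * (1 + P) + K1 = Rb := hRbdef
        linarith
      have habs2 : |∫ τ in t0..t,
          (Real.log (θ.2.1 / sm) * (1 - compR RM σx σr ν0 r τ r0 θ) - r τ r0 θ)|
          ≤ (t - t0) * (Rb + |r0|) := by
        refine le_trans (intervalIntegral.abs_integral_le_integral_abs htt) ?_
        have := intervalIntegral.integral_mono_on htt hII.abs
          (intervalIntegrable_const (c := Rb + |r0|)) hgb
        calc (∫ τ in t0..t,
              |Real.log (θ.2.1 / sm) * (1 - compR RM σx σr ν0 r τ r0 θ) - r τ r0 θ|)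
            ≤ ∫ _ in t0..t, (Rb + |r0|) := this
          _ = (t - t0) * (Rb + |r0|) := by
              rw [intervalIntegral.integral_const, smul_eq_mul]
      have hγθ : 0 ≤ θ.2.2 := hθ.2.2.1
      have hγθ2 : θ.2.2 ≤ γM := hθ.2.2.2
      have hIabs : (0:ℝ) ≤ |∫ τ in t0..t,
          (Real.log (θ.2.1 / sm) * (1 - compR RM σx σr ν0 r τ r0 θ) - r τ r0 θ)| := abs_nonneg _
      have hfin : |r t r0 θ| ≤ |r0| + γM * ((t - t0) * (Rb + |r0|)) := by
        rw [heqn]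
        refine le_trans (abs_add_le _ _) ?_
        rw [abs_mul, abs_of_nonneg hγθ]
        have : θ.2.2 * |∫ τ in t0..t,
            (Real.log (θ.2.1 / sm) * (1 - compR RM σx σr ν0 r τ r0 θ) - r τ r0 θ)|
            ≤ γM * ((t - t0) * (Rb + |r0|)) := by
          calc θ.2.2 * |∫ τ in t0..t,
              (Real.log (θ.2.1 / sm) * (1 - compR RM σx σr ν0 r τ r0 θ) - r τ r0 θ)|
              ≤ γM * |∫ τ in t0..t,
                (Real.log (θ.2.1 / sm) * (1 - compR RM σx σr ν0 r τ r0 θ) - r τ r0 θ)| :=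
                mul_le_mul_of_nonneg_right hγθ2 hIabs
            _ ≤ γM * ((t - t0) * (Rb + |r0|)) :=
                mul_le_mul_of_nonneg_left habs2 hγM.le
        linarith
      -- conclude
      have hr0 := abs_nonneg r0
      have hprod := mul_le_mul_of_nonneg_left hE1 (by linarith : (0:ℝ) ≤ |r0| + Rb)
      have hslack : 0 ≤ γM * (t - t0) * (Rb + |r0|) :=
        mul_nonneg (mul_nonneg hγM.le (by linarith)) (by linarith)
      nlinarith [hfin, hprod, hslack]
    · have hzero : (∫ τ in t0..t,
          (Real.log (θ.2.1 / sm) * (1 - compR RM σx σr ν0 r τ r0 θ) - r τ r0 θ)) = 0 :=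
        intervalIntegral.integral_undef hII
      rw [hzero, mul_zero, add_zero] at heqn
      rw [heqn]
      have hr0 := abs_nonneg r0
      have hE1' : (0:ℝ) ≤ Real.exp (2 * γM * (t - t0)) - 1 := by linarith
      have hprod := mul_nonneg (by linarith : (0:ℝ) ≤ |r0| + Rb) hE1'
      nlinarith [hprod]
  -- Step (vi): integrate
  refine ⟨Rb, hRb0, ?_⟩
  intro t htI htt
  have hint3 : Integrable
      (fun z : ℝ × Param => (|z.1| + Rb) * Real.exp (2 * γM * (t - t0)) - Rb) ν0 :=
    ((hmom.add (integrable_const Rb)).mul_const _).sub (integrable_const Rb)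
  have hle := integral_mono_of_nonneg
    (Filter.Eventually.of_forall (fun z : ℝ × Param => abs_nonneg (r t z.1 z.2)))
    hint3
    (hsupp.mono (fun z hz => h_point t htI htt z.1 z.2 hz))
  refine hle.trans ?_
  have eA : Integrable (fun z : ℝ × Param => |z.1| + Rb) ν0 := hmom.add (integrable_const Rb)
  have eB : Integrable
      (fun z : ℝ × Param => (|z.1| + Rb) * Real.exp (2 * γM * (t - t0))) ν0 :=
    eA.mul_const _
  rw [integral_sub eB (integrable_const Rb), integral_mul_const,
    integral_add hmom (integrable_const Rb), integral_const,
    probReal_univ, one_smul]
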